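/- Let ξ, ξ₁, ξ₂, … be i.i.d. positive random variables and suppose P(ξ > x) ~ 1/L(x) as x → ∞ for a strictly increasing, continuous, slowly varying function L with L(0) = 0 and L(∞) = ∞. Let Sₙ = ξ₁ + … + ξₙ. Then L(Sₙ)/n converges in distribution, as n → ∞, to a random variable X with standard Fréchet distribution P(X ≤ x) = exp(−1/x), x > 0. -/

import Mathlib

open MeasureTheory ProbabilityTheory Set Filter Topology

/-- If `n * p n → c` with `p n ≥ 0`, then `(1 - p n)^n → exp (-c)`. -/
lemma darling_exp_limit (p : ℕ → ℝ) (c : ℝ) (h0 : ∀ n, 0 ≤ p n)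
    (h : Tendsto (fun n : ℕ => (n : ℝ) * p n) atTop (𝓝 c)) :
    Tendsto (fun n : ℕ => (1 - p n) ^ n) atTop (𝓝 (Real.exp (-c))) := by
  have hp0 : Tendsto p atTop (𝓝 0) := by
    have h1 : Tendsto (fun n : ℕ => ((n : ℝ) * p n) * (1 / n)) atTop (𝓝 (c * 0)) :=
      h.mul tendsto_one_div_atTop_nhds_zero_nat
    rw [mul_zero] at h1
    apply h1.congr'
    filter_upwards [eventually_ge_atTop 1] with n hn
    have : (n : ℝ) ≠ 0 := by positivity
    field_simp
  have hsmall : ∀ᶠ n in atTop, p n ≤ 1 / 2 := hp0.eventually_le_const (by norm_num)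
  have hkey : Tendsto (fun n : ℕ => (n : ℝ) * Real.log (1 - p n)) atTop (𝓝 (-c)) := by
    have hdiff : Tendsto (fun n : ℕ => (n : ℝ) * Real.log (1 - p n) + (n : ℝ) * p n)
        atTop (𝓝 0) := by
      apply squeeze_zero_norm' (a := fun n : ℕ => 2 * ((n : ℝ) * p n) * p n)
      · filter_upwards [hsmall] with n hn
        have hpn := h0 n
        have h1p : (0:ℝ) < 1 - p n := by linarith
        have hub : Real.log (1 - p n) ≤ -(p n) := by
          have := Real.log_le_sub_one_of_pos h1p
          linarith
        have hlb : -(p n) - 2 * p n ^ 2 ≤ Real.log (1 - p n) := by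
          have h2 := Real.one_sub_inv_le_log_of_pos h1p
          have hinv : (1 - p n)⁻¹ ≤ 1 + p n + 2 * p n ^ 2 := by
            rw [inv_le_iff_one_le_mul₀ h1p]
            nlinarith
          nlinarith
        have habs : |Real.log (1 - p n) + p n| ≤ 2 * p n ^ 2 := by
          rw [abs_le]; constructor <;> nlinarith
        rw [Real.norm_eq_abs]
        have hn0 : (0:ℝ) ≤ (n:ℝ) := Nat.cast_nonneg n
        calc |(n : ℝ) * Real.log (1 - p n) + (n : ℝ) * p n|
            = (n : ℝ) * |Real.log (1 - p n) + p n| := by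
              rw [← mul_add, abs_mul, abs_of_nonneg hn0]
          _ ≤ (n : ℝ) * (2 * p n ^ 2) := by
              apply mul_le_mul_of_nonneg_left habs hn0
          _ = 2 * ((n : ℝ) * p n) * p n := by ring
      · have := (h.const_mul 2).mul hp0
        simpa using this
    have := hdiff.sub h
    simp only [add_sub_cancel_right] at this
    simpa using this
  have hexp := (Real.continuous_exp.tendsto _).comp hkey
  apply hexp.congr'
  filter_upwards [hsmall] with n hn
  have h1p : (0:ℝ) < 1 - p n := by linarith
  simp only [Function.comp_apply]
  rw [Real.exp_nat_mul, Real.exp_log h1p]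

/-- Pointwise dyadic bound for truncated values. -/
lemma darling_ptwise (r y : ℝ) (hr : 0 < r) (hy : 0 ≤ y) (J : ℕ) :
    min r y ≤ y / 2 ^ (J + 1) +
      ∑ j ∈ Finset.range (J + 1), (y / 2 ^ j) * (if y / 2 ^ (j + 1) < r then 1 else 0) := by
  have hterm : ∀ j ∈ Finset.range (J + 1),
      (0:ℝ) ≤ (y / 2 ^ j) * (if y / 2 ^ (j + 1) < r then 1 else 0) := by
    intro j _
    have : (0:ℝ) ≤ y / 2 ^ j := by positivity
    split <;> simp [this]
  have hsum0 : (0:ℝ) ≤ ∑ j ∈ Finset.range (J + 1),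
      (y / 2 ^ j) * (if y / 2 ^ (j + 1) < r then 1 else 0) := Finset.sum_nonneg hterm
  by_cases h : y / 2 ^ (J + 1) < r
  · have hQ : ∃ j : ℕ, y / 2 ^ (j + 1) < r := ⟨J, h⟩
    set j₀ := Nat.find hQ with hj₀
    have hspec : y / 2 ^ (j₀ + 1) < r := Nat.find_spec hQ
    have hj₀J : j₀ ≤ J := Nat.find_min' hQ h
    have hmem : j₀ ∈ Finset.range (J + 1) := Finset.mem_range.2 (Nat.lt_succ_of_le hj₀J)
    have hsingle : (y / 2 ^ j₀) * (if y / 2 ^ (j₀ + 1) < r then 1 else 0) ≤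
        ∑ j ∈ Finset.range (J + 1), (y / 2 ^ j) * (if y / 2 ^ (j + 1) < r then 1 else 0) :=
      Finset.single_le_sum hterm hmem
    rw [if_pos hspec, mul_one] at hsingle
    have hminle : min r y ≤ y / 2 ^ j₀ := by
      rcases Nat.eq_zero_or_pos j₀ with h0 | hpos
      · rw [h0]; simpa using min_le_right r y
      · obtain ⟨m, hm⟩ := Nat.exists_eq_succ_of_ne_zero hpos.ne'
        have hnot : ¬ y / 2 ^ (m + 1) < r := Nat.find_min hQ (by omega)
        push_neg at hnot
        rw [hm]
        exact le_trans (min_le_left r y) hnot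
    have htail0 : (0:ℝ) ≤ y / 2 ^ (J + 1) := by positivity
    linarith
  · push_neg at h
    have : min r y ≤ y / 2 ^ (J + 1) := le_trans (min_le_left r y) h
    linarith

/-- Geometric sum bound. -/
lemma darling_geom (m : ℕ) : ∑ j ∈ Finset.range m, ((5:ℝ)/8) ^ j ≤ 8/3 := by
  have h := geom_sum_eq (by norm_num : ((5:ℝ)/8) ≠ 1) m
  rw [h]
  have h1 : (0:ℝ) ≤ (5/8:ℝ) ^ m := by positivity
  have h2 : ((5:ℝ)/8) ^ m ≤ 1 := pow_le_one₀ (by norm_num) (by norm_num)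
  have : ((5:ℝ)/8) - 1 = -(3/8) := by norm_num
  rw [this, div_neg]
  have heq : (((5:ℝ)/8) ^ m - 1) / (3/8) = (8/3) * ((5/8) ^ m - 1) := by ring
  rw [heq]
  nlinarith

/-- Shuffling powers in the geometric estimate. -/
lemma darling_pow_shuffle (j : ℕ) (y Ly : ℝ) (h : Ly ≠ 0) :
    (3/2) * (5/4) ^ (j+1) / Ly * (y / 2 ^ j) = (15/8) * (5/8) ^ j * (y / Ly) := by
  have hpp : ((5:ℝ)/8) ^ j = (5/4) ^ j / 2 ^ j := by
    rw [show ((5:ℝ)/8) = (5/4)/2 by norm_num, div_pow]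
  rw [hpp, pow_succ]
  field_simp
  ring

/-- Partial sums `S n = ξ₁ + … + ξ_n` of the steps `ξ`. -/
def rwS {Ω : Type*} (ξ : ℕ → Ω → ℝ) (n : ℕ) (ω : Ω) : ℝ :=
  ∑ i ∈ Finset.range n, ξ i ω

/-- First-passage time `ν(t) = inf {k : S_k > t}`. -/
noncomputable def rwNu {Ω : Type*} (ξ : ℕ → Ω → ℝ) (t : ℝ) (ω : Ω) : ℕ :=
  sInf {k : ℕ | t < rwS ξ k ω}

set_option maxHeartbeats 1000000 in
theorem stmt12 {Ω : Type*} [MeasurableSpace Ω] (P : Measure Ω) [IsProbabilityMeasure P]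
    (ξ : ℕ → Ω → ℝ) (hmeas : ∀ n, Measurable (ξ n))
    (hindep : iIndepFun ξ P)
    (hid : ∀ n, IdentDistrib (ξ n) (ξ 0) P P)
    (hpos : ∀ n ω, 0 < ξ n ω)
    (L : ℝ → ℝ)
    (hmono : StrictMonoOn L (Ici 0)) (hcont : ContinuousOn L (Ici 0))
    (hL0 : L 0 = 0) (htop : Tendsto L atTop atTop)
    (hslow : ∀ c > (0:ℝ), Tendsto (fun x => L (c * x) / L x) atTop (𝓝 1))
    (htail : Tendsto (fun x => (P {ω | x < ξ 0 ω}).toReal * L x) atTop (𝓝 1)) :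
    ∀ x > (0:ℝ),
      Tendsto (fun n : ℕ => (P {ω | L (rwS ξ n ω) / n ≤ x}).toReal) atTop
        (𝓝 (Real.exp (-1 / x))) := by
  intro x hx
  classical
  have hxne : x ≠ 0 := ne_of_gt hx
  set p : ℝ → ℝ := fun y => (P {ω | y < ξ 0 ω}).toReal with hpdef
  have htail' : Tendsto (fun y => p y * L y) atTop (𝓝 1) := htail
  have hp0 : ∀ y, 0 ≤ p y := fun y => ENNReal.toReal_nonneg
  have hp1 : ∀ y, p y ≤ 1 := by
    intro y
    have h := ENNReal.toReal_mono ENNReal.one_ne_top (prob_le_one (μ := P) (s := {ω | y < ξ 0 ω}))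
    simpa using h
  have hms' : ∀ (i : ℕ) (y : ℝ), MeasurableSet {ω | y < ξ i ω} := fun i y =>
    (hmeas i) measurableSet_Ioi
  have hLpos : ∀ y : ℝ, 0 < y → 0 < L y := by
    intro y hy
    have h := hmono Set.self_mem_Ici (Set.mem_Ici.2 hy.le) hy
    rwa [hL0] at h
  have hLmono : MonotoneOn L (Ici 0) := hmono.monotoneOn
  -- the inverse points t n with L (t n) = n * x
  have ht_ex : ∀ n : ℕ, ∃ s, 0 ≤ s ∧ L s = n * x := by
    intro n
    obtain ⟨b, hb⟩ :=
      ((htop.eventually_ge_atTop ((n : ℝ) * x)).and (eventually_ge_atTop (0:ℝ))).exists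
    have h0b : (0:ℝ) ≤ b := hb.2
    have hmem : (n : ℝ) * x ∈ Icc (L 0) (L b) := by
      constructor
      · rw [hL0]; positivity
      · exact hb.1
    obtain ⟨s, hs, hsL⟩ := intermediate_value_Icc h0b (hcont.mono Icc_subset_Ici_self) hmem
    exact ⟨s, hs.1, hsL⟩
  choose t ht0 htL using ht_ex
  have httop : Tendsto t atTop atTop := by
    rw [tendsto_atTop]
    intro M
    have hnx : Tendsto (fun n : ℕ => (n : ℝ) * x) atTop atTop :=
      tendsto_natCast_atTop_atTop.atTop_mul_const hx
    filter_upwards [hnx.eventually_gt_atTop (L (max M 0))] with n hn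
    by_contra hlt
    push_neg at hlt
    have h1 : t n < max M 0 := lt_of_lt_of_le hlt (le_max_left M 0)
    have h2 := hmono (Set.mem_Ici.2 (ht0 n)) (Set.mem_Ici.2 (le_max_right M 0)) h1
    rw [htL] at h2
    exact absurd hn (not_lt.2 h2.le)
  have htpos : ∀ n : ℕ, 1 ≤ n → 0 < t n := by
    intro n hn
    rcases (ht0 n).eq_or_lt with h | h
    · exfalso
      have h1 := htL n
      rw [← h, hL0] at h1
      have h2 : (0:ℝ) < (n : ℝ) * x := by
        have : (0:ℝ) < (n:ℝ) := by exact_mod_cast hn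
        positivity
      rw [← h1] at h2
      exact lt_irrefl _ h2
    · exact h
  -- the key tail asymptotics along c * t n
  have hB : ∀ c : ℝ, 0 < c → Tendsto (fun n : ℕ => (n : ℝ) * p (c * t n)) atTop (𝓝 (1 / x)) := by
    intro c hc
    have hct : Tendsto (fun n : ℕ => c * t n) atTop atTop := httop.const_mul_atTop hc
    have h1 : Tendsto (fun n : ℕ => p (c * t n) * L (c * t n)) atTop (𝓝 1) := htail'.comp hct
    have h2 : Tendsto (fun n : ℕ => L (t n) / L (c * t n)) atTop (𝓝 1) := by
      have h3 := (hslow c hc).comp httop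
      have h4 := h3.inv₀ one_ne_zero
      rw [inv_one] at h4
      apply h4.congr
      intro n
      show (L (c * t n) / L (t n))⁻¹ = _
      rw [inv_div]
    have h5 := (h1.mul h2).mul (tendsto_const_nhds (x := 1/x) (f := atTop (α := ℕ)))
    rw [one_mul, one_mul] at h5
    refine Tendsto.congr' ?_ h5
    filter_upwards [eventually_ge_atTop 1, httop.eventually_gt_atTop 0] with n hn htn
    have hLc : 0 < L (c * t n) := hLpos _ (by positivity)
    have hLt : L (t n) = (n : ℝ) * x := htL n
    rw [hLt]
    field_simp
  have hprod : ∀ c : ℝ, 0 < c →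
      Tendsto (fun n : ℕ => (1 - p (c * t n)) ^ n) atTop (𝓝 (Real.exp (-(1/x)))) :=
    fun c hc => darling_exp_limit _ (1/x) (fun n => hp0 _) (hB c hc)
  -- product formula
  have hFn : ∀ (n : ℕ) (y : ℝ), P (⋂ i ∈ Finset.range n, {ω | ξ i ω ≤ y}) =
      (P {ω | ξ 0 ω ≤ y}) ^ n := by
    intro n y
    rw [hindep.meas_biInter (S := Finset.range n) (s := fun i => {ω | ξ i ω ≤ y})
      (fun i _ => ⟨Iic y, measurableSet_Iic, rfl⟩)]
    have hconst : ∀ i ∈ Finset.range n, P {ω | ξ i ω ≤ y} = P {ω | ξ 0 ω ≤ y} := by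
      intro i _
      exact (hid i).measure_mem_eq (measurableSet_Iic : MeasurableSet (Iic y))
    rw [Finset.prod_congr rfl hconst, Finset.prod_const, Finset.card_range]
  have hF : ∀ y : ℝ, (P {ω | ξ 0 ω ≤ y}).toReal = 1 - p y := by
    intro y
    have hcompl : {ω | ξ 0 ω ≤ y} = {ω | y < ξ 0 ω}ᶜ := by
      ext ω; simp [not_lt]
    rw [hcompl, measure_compl (hms' 0 y) (measure_ne_top P _), measure_univ,
      ENNReal.toReal_sub_of_le prob_le_one ENNReal.one_ne_top]
    simp [hpdef]
  -- the event identification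
  have hev : ∀ n : ℕ, 1 ≤ n → {ω | L (rwS ξ n ω) / n ≤ x} = {ω | rwS ξ n ω ≤ t n} := by
    intro n hn
    ext ω
    have hS0 : (0:ℝ) ≤ rwS ξ n ω := Finset.sum_nonneg fun i _ => (hpos i ω).le
    have hn0 : (0:ℝ) < (n:ℝ) := by exact_mod_cast hn
    simp only [mem_setOf_eq]
    rw [div_le_iff₀ hn0, show x * (n:ℝ) = L (t n) by rw [htL n]; ring]
    exact hmono.le_iff_le (Set.mem_Ici.2 hS0) (Set.mem_Ici.2 (ht0 n))
  -- upper bound via the maximum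
  have hub : ∀ n : ℕ, (P {ω | rwS ξ n ω ≤ t n}).toReal ≤ (1 - p (t n)) ^ n := by
    intro n
    have hsub : {ω | rwS ξ n ω ≤ t n} ⊆ ⋂ i ∈ Finset.range n, {ω | ξ i ω ≤ t n} := by
      intro ω hω
      simp only [mem_iInter]
      intro i hi
      have h1 : ξ i ω ≤ rwS ξ n ω :=
        Finset.single_le_sum (f := fun j => ξ j ω) (fun j _ => (hpos j ω).le) hi
      exact le_trans h1 hω
    have h3 := ENNReal.toReal_mono (measure_ne_top P _) (measure_mono hsub)
    calc (P {ω | rwS ξ n ω ≤ t n}).toReal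
        ≤ (P (⋂ i ∈ Finset.range n, {ω | ξ i ω ≤ t n})).toReal := h3
      _ = ((P {ω | ξ 0 ω ≤ t n}) ^ n).toReal := by rw [hFn]
      _ = (P {ω | ξ 0 ω ≤ t n}).toReal ^ n := ENNReal.toReal_pow _ _
      _ = (1 - p (t n)) ^ n := by rw [hF]
  -- eventual regularity constants
  obtain ⟨a₀, haP₀⟩ : ∃ a₀ : ℝ, ∀ y ≥ a₀,
      p y * L y ≤ 3/2 ∧ 1/2 ≤ p y * L y ∧ (4/5) * L y ≤ L (2⁻¹ * y) := by
    have e1 : ∀ᶠ y in atTop, p y * L y ≤ 3/2 := htail'.eventually_le_const (by norm_num)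
    have e2 : ∀ᶠ y in atTop, 1/2 ≤ p y * L y := htail'.eventually_const_le (by norm_num)
    have e3 : ∀ᶠ y in atTop, (4/5) * L y ≤ L (2⁻¹ * y) := by
      have h := (hslow 2⁻¹ (by norm_num)).eventually_const_le (show (4:ℝ)/5 < 1 by norm_num)
      filter_upwards [h, eventually_gt_atTop (0:ℝ)] with y h1 h2
      have hLy : 0 < L y := hLpos y h2
      rw [le_div_iff₀ hLy] at h1
      linarith
    exact ((e1.and (e2.and e3)).and (eventually_ge_atTop 0)).exists_forall_of_atTop.imp
      (fun a₀ h y hy => (h y hy).1)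
  set a : ℝ := max a₀ 1 with hadef
  have ha1 : (1:ℝ) ≤ a := le_max_right _ _
  have hapos : (0:ℝ) < a := lt_of_lt_of_le one_pos ha1
  have haP : ∀ y, a ≤ y →
      p y * L y ≤ 3/2 ∧ 1/2 ≤ p y * L y ∧ (4/5) * L y ≤ L (2⁻¹ * y) :=
    fun y hy => haP₀ y (le_trans (le_max_left _ _) hy)
  have haL : ∀ y, a ≤ y → 0 < L y := fun y hy => hLpos y (lt_of_lt_of_le hapos hy)
  have hLhalf : ∀ y, a ≤ y → L y ≤ (5/4) * L (2⁻¹ * y) := by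
    intro y hy
    have h := (haP y hy).2.2
    linarith
  have hpb : ∀ y, a ≤ y → p y ≤ (3/2) / L y := by
    intro y hy
    rw [le_div_iff₀ (haL y hy)]
    exact (haP y hy).1
  -- iterated halving
  have hiter : ∀ (j : ℕ) (y : ℝ), a ≤ y / 2 ^ j → L y ≤ (5/4) ^ j * L (y / 2 ^ j) := by
    intro j
    induction j with
    | zero => intro y hy; simp
    | succ j ih =>
      intro y hy
      have hy2 : a ≤ y / 2 ^ j := by
        have e : y / 2 ^ j = y / 2 ^ (j+1) * 2 := by
          rw [pow_succ]; ring
        rw [e]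
        linarith
      have ih' := ih y hy2
      have hstep := hLhalf (y / 2 ^ j) hy2
      have harg : 2⁻¹ * (y / 2 ^ j) = y / 2 ^ (j + 1) := by
        rw [pow_succ]; ring
      rw [harg] at hstep
      have hpow : (0:ℝ) ≤ (5/4) ^ j := by positivity
      calc L y ≤ (5/4) ^ j * L (y / 2 ^ j) := ih'
        _ ≤ (5/4) ^ j * ((5/4) * L (y / 2 ^ (j+1))) := mul_le_mul_of_nonneg_left hstep hpow
        _ = (5/4) ^ (j+1) * L (y / 2 ^ (j+1)) := by ring
  -- dyadic localization
  have hscale : ∀ y : ℝ, a ≤ y → ∃ k : ℕ, a ≤ y / 2 ^ k ∧ y / 2 ^ k < 2 * a := by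
    intro y hy
    have hex : ∃ k : ℕ, y < 2 ^ k * (2 * a) := by
      obtain ⟨k, hk⟩ := pow_unbounded_of_one_lt (y / (2*a)) (by norm_num : (1:ℝ) < 2)
      refine ⟨k, ?_⟩
      rw [div_lt_iff₀ (by positivity)] at hk
      nlinarith [pow_pos (show (0:ℝ) < 2 by norm_num) k]
    refine ⟨Nat.find hex, ?_, ?_⟩
    · rcases Nat.eq_zero_or_pos (Nat.find hex) with h0 | hposk
      · rw [h0]; simpa using hy
      · obtain ⟨m, hm⟩ := Nat.exists_eq_succ_of_ne_zero hposk.ne'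
        have hnot : ¬ y < 2 ^ m * (2 * a) := Nat.find_min hex (by omega)
        push_neg at hnot
        rw [hm, le_div_iff₀ (by positivity : (0:ℝ) < 2 ^ (m+1))]
        calc a * 2 ^ (m+1) = 2 ^ m * (2*a) := by ring
          _ ≤ y := hnot
    · have hspec : y < 2 ^ Nat.find hex * (2 * a) := Nat.find_spec hex
      rw [div_lt_iff₀ (by positivity)]
      nlinarith [hspec]
  -- sub-polynomial growth of L
  set Ca : ℝ := (L (2 * a)) ^ 2 / a with hCadef
  have hsq : ∀ y : ℝ, a ≤ y → (L y) ^ 2 ≤ Ca * y := by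
    intro y hy
    obtain ⟨k, hk1, hk2⟩ := hscale y hy
    have h1 := hiter k y hk1
    have h2 : L (y / 2 ^ k) ≤ L (2 * a) :=
      hLmono (Set.mem_Ici.2 (le_trans hapos.le hk1)) (Set.mem_Ici.2 (by positivity)) hk2.le
    have h3 : 0 < L (y / 2 ^ k) := hLpos _ (lt_of_lt_of_le hapos hk1)
    have h4 : 0 < L y := hLpos y (lt_of_lt_of_le hapos hy)
    have h5 : L y ≤ (5/4) ^ k * L (2 * a) := by
      calc L y ≤ (5/4) ^ k * L (y / 2 ^ k) := h1
        _ ≤ (5/4) ^ k * L (2 * a) := mul_le_mul_of_nonneg_left h2 (by positivity)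
    have h6 : (L y) ^ 2 ≤ ((5/4 : ℝ) ^ k) ^ 2 * (L (2*a)) ^ 2 := by nlinarith [h5, h4, h3, h2]
    have h7 : (((5:ℝ)/4) ^ k) ^ 2 = (25/16) ^ k := by
      rw [← pow_mul, show (25:ℝ)/16 = (5/4) ^ 2 by norm_num, ← pow_mul, mul_comm]
    have h8 : ((25:ℝ)/16) ^ k ≤ 2 ^ k := pow_le_pow_left₀ (by norm_num) (by norm_num) k
    have h9 : (2:ℝ) ^ k ≤ y / a := by
      rw [le_div_iff₀ hapos]
      rw [le_div_iff₀ (by positivity : (0:ℝ) < 2 ^ k)] at hk1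
      linarith [hk1, mul_comm ((2:ℝ) ^ k) a]
    have h10 : (0:ℝ) ≤ (L (2*a)) ^ 2 := sq_nonneg _
    calc (L y) ^ 2 ≤ ((5/4 : ℝ) ^ k) ^ 2 * (L (2*a)) ^ 2 := h6
      _ = (25/16) ^ k * (L (2*a)) ^ 2 := by rw [h7]
      _ ≤ (y / a) * (L (2*a)) ^ 2 := mul_le_mul_of_nonneg_right (h8.trans h9) h10
      _ = Ca * y := by rw [hCadef]; field_simp
  have hCapos : 0 < Ca := div_pos (pow_pos (hLpos _ (by positivity)) 2) hapos
  -- n / t n tends to zero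
  have hnt : Tendsto (fun n : ℕ => (n : ℝ) / t n) atTop (𝓝 0) := by
    have hg : Tendsto (fun n : ℕ => (Ca / x^2) / n) atTop (𝓝 0) :=
      tendsto_const_div_atTop_nhds_zero_nat _
    apply squeeze_zero' ?_ ?_ hg
    · filter_upwards [httop.eventually_gt_atTop 0] with n hn
      positivity
    · filter_upwards [httop.eventually_ge_atTop a, eventually_ge_atTop 1] with n h1 h2
      have htn : 0 < t n := lt_of_lt_of_le hapos h1
      have hsq' := hsq (t n) h1
      rw [htL n] at hsq'
      have hn0 : (0:ℝ) < (n:ℝ) := by exact_mod_cast h2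
      have hx2 : (0:ℝ) < x ^ 2 := by positivity
      rw [div_le_div_iff₀ htn hn0, div_mul_eq_mul_div, le_div_iff₀ hx2]
      nlinarith [hsq']
  -- integrability of truncations
  have hmin_int : ∀ (i : ℕ) (y : ℝ), 0 ≤ y → Integrable (fun ω => min (ξ i ω) y) P := by
    intro i y hy
    refine Integrable.mono' (integrable_const y)
      (((hmeas i).min measurable_const).aestronglyMeasurable) ?_
    filter_upwards with ω
    rw [Real.norm_eq_abs, abs_of_nonneg (le_min (hpos i ω).le hy)]
    exact min_le_right _ _
  -- value of indicator integrals
  have hind_eq : ∀ (c s : ℝ), (fun ω => c * (if s < ξ 0 ω then (1:ℝ) else 0)) =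
      ({ω | s < ξ 0 ω}.indicator (fun _ => c)) := by
    intro c s
    ext ω
    simp only [Set.indicator_apply, Set.mem_setOf_eq]
    by_cases h : s < ξ 0 ω
    · simp [h]
    · simp [h]
  have hind_int : ∀ (c s : ℝ), Integrable (fun ω => c * (if s < ξ 0 ω then (1:ℝ) else 0)) P := by
    intro c s
    rw [hind_eq]
    exact (integrable_const c).indicator (hms' 0 s)
  have hind_val : ∀ (c s : ℝ),
      ∫ ω, c * (if s < ξ 0 ω then (1:ℝ) else 0) ∂P = p s * c := by
    intro c s
    rw [hind_eq, integral_indicator_const _ (hms' 0 s)]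
    simp [hpdef, smul_eq_mul]
    exact Or.inl rfl
  -- Karamata-type truncated expectation bound
  have hexp : ∀ y : ℝ, 4 * a ≤ y → ∫ ω, min (ξ 0 ω) y ∂P ≤ 2 * a + 5 * (y / L y) := by
    intro y hy4
    have hya : a ≤ y := by linarith
    have hy0 : (0:ℝ) ≤ y := by linarith
    have hLy : 0 < L y := haL y hya
    obtain ⟨k, hk1, hk2⟩ := hscale y hya
    have hk0 : k ≠ 0 := by
      intro h0
      rw [h0] at hk2
      simp only [pow_zero, div_one] at hk2
      linarith
    obtain ⟨J, hJ⟩ := Nat.exists_eq_succ_of_ne_zero hk0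
    rw [hJ] at hk1 hk2
    have hgint : Integrable (fun ω => y / 2 ^ (J + 1) +
        ∑ j ∈ Finset.range (J + 1),
          (y / 2 ^ j) * (if y / 2 ^ (j + 1) < ξ 0 ω then (1:ℝ) else 0)) P := by
      exact (integrable_const _).add
        (integrable_finset_sum _ (fun j _ => hind_int (y / 2 ^ j) (y / 2 ^ (j+1))))
    have hptw : ∀ ω, min (ξ 0 ω) y ≤ y / 2 ^ (J + 1) +
        ∑ j ∈ Finset.range (J + 1),
          (y / 2 ^ j) * (if y / 2 ^ (j + 1) < ξ 0 ω then (1:ℝ) else 0) :=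
      fun ω => darling_ptwise _ y (hpos 0 ω) hy0 J
    have hile := integral_mono (hmin_int 0 y hy0) hgint hptw
    have hgval : ∫ ω, (y / 2 ^ (J + 1) +
        ∑ j ∈ Finset.range (J + 1),
          (y / 2 ^ j) * (if y / 2 ^ (j + 1) < ξ 0 ω then (1:ℝ) else 0)) ∂P =
        y / 2 ^ (J + 1) +
          ∑ j ∈ Finset.range (J + 1), p (y / 2 ^ (j+1)) * (y / 2 ^ j) := by
      rw [integral_add (integrable_const _)
        (integrable_finset_sum _ (fun j _ => hind_int (y / 2 ^ j) (y / 2 ^ (j+1))))]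
      rw [integral_const]
      rw [integral_finset_sum _ (fun j _ => hind_int (y / 2 ^ j) (y / 2 ^ (j+1)))]
      simp only [probReal_univ, one_smul]
      congr 1
      exact Finset.sum_congr rfl fun j _ => hind_val (y / 2 ^ j) (y / 2 ^ (j+1))
    rw [hgval] at hile
    -- estimate the sum
    have hsum : ∑ j ∈ Finset.range (J + 1), p (y / 2 ^ (j+1)) * (y / 2 ^ j) ≤ 5 * (y / L y) := by
      have hterm : ∀ j ∈ Finset.range (J + 1),
          p (y / 2 ^ (j+1)) * (y / 2 ^ j) ≤ (15/8) * (y / L y) * (5/8) ^ j := by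
        intro j hj
        have hjJ : j + 1 ≤ J + 1 := Nat.succ_le_succ (Nat.lt_succ_iff.1 (Finset.mem_range.1 hj))
        have hargj : a ≤ y / 2 ^ (j+1) := by
          refine le_trans hk1 ?_
          apply div_le_div_of_nonneg_left hy0 (by positivity)
          exact pow_le_pow_right₀ (by norm_num) hjJ
        have hLj := haL _ hargj
        have h1 := hpb _ hargj
        have h2 := hiter (j+1) y hargj
        have hyj : (0:ℝ) ≤ y / 2 ^ j := by positivity
        have h3 : (3/2) / L (y / 2 ^ (j+1)) ≤ (3/2) * (5/4) ^ (j+1) / L y := by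
          rw [div_le_div_iff₀ hLj hLy]
          nlinarith [h2, hLj]
        calc p (y / 2 ^ (j+1)) * (y / 2 ^ j)
            ≤ ((3/2) / L (y / 2 ^ (j+1))) * (y / 2 ^ j) := mul_le_mul_of_nonneg_right h1 hyj
          _ ≤ ((3/2) * (5/4) ^ (j+1) / L y) * (y / 2 ^ j) := mul_le_mul_of_nonneg_right h3 hyj
          _ = (15/8) * (5/8) ^ j * (y / L y) := darling_pow_shuffle j y (L y) hLy.ne'
          _ = (15/8) * (y / L y) * (5/8) ^ j := by ring
      calc ∑ j ∈ Finset.range (J + 1), p (y / 2 ^ (j+1)) * (y / 2 ^ j)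
          ≤ ∑ j ∈ Finset.range (J + 1), (15/8) * (y / L y) * (5/8) ^ j :=
            Finset.sum_le_sum hterm
        _ = (15/8) * (y / L y) * ∑ j ∈ Finset.range (J + 1), (5/8) ^ j := by
            rw [Finset.mul_sum]
        _ ≤ (15/8) * (y / L y) * (8/3) := by
            apply mul_le_mul_of_nonneg_left (darling_geom _) (by positivity)
        _ = 5 * (y / L y) := by ring
    have htail0 : y / 2 ^ (J + 1) ≤ 2 * a := hk2.le
    exact hile.trans (add_le_add htail0 hsum)
  -- Markov bound
  have hmark : ∀ (n : ℕ) (y : ℝ), 0 < t n → 0 ≤ y →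
      (P {ω | t n ≤ ∑ i ∈ Finset.range n, min (ξ i ω) y}).toReal ≤
        ((n : ℝ) * ∫ ω, min (ξ 0 ω) y ∂P) / t n := by
    intro n y htn hy
    have hsum_int : Integrable (fun ω => ∑ i ∈ Finset.range n, min (ξ i ω) y) P :=
      integrable_finset_sum _ (fun i _ => hmin_int i y hy)
    have hnn : 0 ≤ᵐ[P] (fun ω => ∑ i ∈ Finset.range n, min (ξ i ω) y) := by
      filter_upwards with ω
      exact Finset.sum_nonneg fun i _ => le_min (hpos i ω).le hy
    have hmv := mul_meas_ge_le_integral_of_nonneg hnn hsum_int (t n)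
    have hI : ∫ ω, (∑ i ∈ Finset.range n, min (ξ i ω) y) ∂P =
        (n : ℝ) * ∫ ω, min (ξ 0 ω) y ∂P := by
      rw [integral_finset_sum _ (fun i _ => hmin_int i y hy)]
      have hconst : ∀ i ∈ Finset.range n,
          ∫ ω, min (ξ i ω) y ∂P = ∫ ω, min (ξ 0 ω) y ∂P := by
        intro i _
        exact ((hid i).comp (measurable_id.min measurable_const)).integral_eq
      rw [Finset.sum_congr rfl hconst, Finset.sum_const, Finset.card_range, nsmul_eq_mul]
    rw [hI, measureReal_def] at hmv
    rw [le_div_iff₀ htn]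
    linarith [hmv, mul_comm (t n) ((P {ω | t n ≤ ∑ i ∈ Finset.range n, min (ξ i ω) y}).toReal)]
  -- final assembly
  rw [show (-1:ℝ)/x = -(1/x) by ring]
  rw [Metric.tendsto_nhds]
  intro ε hε
  set δ : ℝ := min 1 (x * ε / 20) with hδdef
  have hδpos : 0 < δ := lt_min one_pos (by positivity)
  have hδx : 5 * δ / x ≤ ε / 4 := by
    have h1 : δ ≤ x * ε / 20 := min_le_right _ _
    rw [div_le_div_iff₀ hx (by norm_num : (0:ℝ) < 4)]
    nlinarith [h1]
  have hδt : Tendsto (fun n : ℕ => δ * t n) atTop atTop := httop.const_mul_atTop hδpos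
  have hc1 := hprod 1 one_pos
  simp only [one_mul] at hc1
  have hcδ := hprod δ hδpos
  have hLδ : Tendsto (fun n : ℕ => (n:ℝ) / L (δ * t n)) atTop (𝓝 (1/x)) := by
    have hnum := hB δ hδpos
    have hden : Tendsto (fun n : ℕ => p (δ * t n) * L (δ * t n)) atTop (𝓝 1) :=
      htail'.comp hδt
    have hdiv := hnum.div hden one_ne_zero
    rw [div_one] at hdiv
    refine Tendsto.congr' ?_ hdiv
    filter_upwards [hδt.eventually_ge_atTop a] with n hn
    have hLp : 0 < L (δ * t n) := haL _ hn
    have hpp : 0 < p (δ * t n) := by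
      have h := (haP _ hn).2.1
      nlinarith [hLp, hp1 (δ * t n)]
    rw [Pi.div_apply]
    field_simp
  have hR : Tendsto (fun n : ℕ => 2*a*((n:ℝ)/t n) + 5*(δ*((n:ℝ)/L (δ * t n))))
      atTop (𝓝 (5*δ/x)) := by
    have h := (hnt.const_mul (2*a)).add ((hLδ.const_mul δ).const_mul 5)
    rw [show 2*a*0 + 5*(δ*(1/x)) = 5*δ/x by field_simp; ring] at h
    exact h
  have e1 := (Metric.tendsto_nhds.1 hc1) (ε/4) (by positivity)
  have e2 := (Metric.tendsto_nhds.1 hcδ) (ε/4) (by positivity)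
  have e3 := (Metric.tendsto_nhds.1 hR) (ε/4) (by positivity)
  have e4 : ∀ᶠ n : ℕ in atTop, 4 * a ≤ δ * t n := hδt.eventually_ge_atTop _
  filter_upwards [e1, e2, e3, e4, eventually_ge_atTop 1] with n h1 h2 h3 h4 hn
  have htn : 0 < t n := htpos n hn
  have hyLa : a ≤ δ * t n := by linarith [hapos]
  have hLy : 0 < L (δ * t n) := haL _ hyLa
  rw [Real.dist_eq] at h1 h2 h3
  rw [Real.dist_eq, hev n hn]
  -- upper bound
  have hup : (P {ω | rwS ξ n ω ≤ t n}).toReal ≤ Real.exp (-(1/x)) + ε/4 := by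
    have hb := hub n
    have hb1 := abs_lt.1 h1
    linarith [hb1.2]
  -- lower bound
  have hlow : Real.exp (-(1/x)) - (3*ε/4) ≤ (P {ω | rwS ξ n ω ≤ t n}).toReal := by
    have hsub2 : (⋂ i ∈ Finset.range n, {ω | ξ i ω ≤ δ * t n}) ⊆
        {ω | rwS ξ n ω ≤ t n} ∪
          {ω | t n ≤ ∑ i ∈ Finset.range n, min (ξ i ω) (δ * t n)} := by
      intro ω hω
      by_cases hS : rwS ξ n ω ≤ t n
      · exact Or.inl hS
      · right
        push_neg at hS
        simp only [Set.mem_iInter, Set.mem_setOf_eq] at hω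
        have hmem : ∀ i ∈ Finset.range n, min (ξ i ω) (δ * t n) = ξ i ω :=
          fun i hi => min_eq_left (hω i hi)
        show t n ≤ ∑ i ∈ Finset.range n, min (ξ i ω) (δ * t n)
        rw [Finset.sum_congr rfl hmem]
        exact hS.le
    have hm1 : P (⋂ i ∈ Finset.range n, {ω | ξ i ω ≤ δ * t n}) ≤
        P {ω | rwS ξ n ω ≤ t n} +
          P {ω | t n ≤ ∑ i ∈ Finset.range n, min (ξ i ω) (δ * t n)} :=
      le_trans (measure_mono hsub2) (measure_union_le _ _)
    have hm2 := ENNReal.toReal_mono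
      (ENNReal.add_ne_top.2 ⟨measure_ne_top P _, measure_ne_top P _⟩) hm1
    rw [ENNReal.toReal_add (measure_ne_top P _) (measure_ne_top P _)] at hm2
    have hE2 : (P (⋂ i ∈ Finset.range n, {ω | ξ i ω ≤ δ * t n})).toReal
        = (1 - p (δ * t n))^n := by
      rw [hFn n (δ * t n), ENNReal.toReal_pow, hF]
    have hT : (P {ω | t n ≤ ∑ i ∈ Finset.range n, min (ξ i ω) (δ * t n)}).toReal ≤
        2*a*((n:ℝ)/t n) + 5*(δ*((n:ℝ)/L (δ * t n))) := by
      have hmv := hmark n (δ * t n) htn (by positivity)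
      have hexp' := hexp (δ * t n) h4
      have hNn : (0:ℝ) ≤ (n:ℝ) := Nat.cast_nonneg n
      have hstep : ((n:ℝ) * ∫ ω, min (ξ 0 ω) (δ * t n) ∂P) / t n ≤
          ((n:ℝ) * (2*a + 5*((δ * t n) / L (δ * t n)))) / t n :=
        (div_le_div_iff_of_pos_right htn).2 (mul_le_mul_of_nonneg_left hexp' hNn)
      have halg : ((n:ℝ) * (2*a + 5*((δ * t n) / L (δ * t n)))) / t n =
          2*a*((n:ℝ)/t n) + 5*(δ*((n:ℝ)/L (δ * t n))) := by
        have htne : t n ≠ 0 := ne_of_gt htn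
        have hLne : L (δ * t n) ≠ 0 := ne_of_gt hLy
        field_simp
      rw [halg] at hstep
      exact le_trans hmv hstep
    have h2' := abs_lt.1 h2
    have h3' := abs_lt.1 h3
    rw [hE2] at hm2
    linarith [h2'.1, h3'.2]
  rw [abs_lt]
  constructor <;> linarith
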